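/- In the setting of the mock metaplectic representation with Φ : X → Y a submersion and fiber measures ν_y from the coarea disintegration, fix y ∈ Y and h ∈ H. Then the map T_{y,h} : L²(X,ν_y) → L²(X,ν_{h[y]}) defined by (T_{y,h} f)(x) = √(α(h⁻¹)β(h⁻¹)) f(h⁻¹.x) is a unitary operator, and satisfies the cocycle identities T_{h[y],h'} ∘ T_{y,h} = T_{y,h'h} and T_{y,h}⁻¹ = T_{h[y],h⁻¹} for all h, h' ∈ H and y ∈Y. -/

import Mathlib

open MeasureTheory
open scoped ENNReal

/-- With the fiber measures `ν_y` satisfying the covariance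
`ν_{h[y]}^h = α(h)β(h) ν_y`, for fixed `y` and `h` the map
`(T_{y,h} f)(x) = √(α(h⁻¹)β(h⁻¹)) f(h⁻¹.x)` is a unitary operator
`L²(X,ν_y) → L²(X,ν_{h[y]})` and the cocycle identities
`T_{h[y],h'} ∘ T_{y,h} = T_{y,h'h}` and `T_{y,h}⁻¹ = T_{h[y],h⁻¹}` hold. -/
theorem stmt_10
    (n d : ℕ) (H : Type*) [Group H]
    -- linear action of `H` on `ℝⁿ`
    (ρ : H →* (EuclideanSpace ℝ (Fin n) ≃L[ℝ] EuclideanSpace ℝ (Fin n)))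
    -- action of `H` on `ℝᵈ`
    (σ : H → EuclideanSpace ℝ (Fin d) → EuclideanSpace ℝ (Fin d))
    (hσ_one : ∀ x, σ 1 x = x)
    (hσ_mul : ∀ h₁ h₂ x, σ (h₁ * h₂) x = σ h₁ (σ h₂ x))
    (hσ_cont : ∀ h, Continuous (σ h))
    -- the characters `α`, `β`
    (α β : H → ℝ)
    (hα_pos : ∀ h, 0 < α h) (hβ_pos : ∀ h, 0 < β h)
    (hα_mul : ∀ h₁ h₂, α (h₁ * h₂) = α h₁ * α h₂)
    (hβ_mul : ∀ h₁ h₂, β (h₁ * h₂) = β h₁ * β h₂)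
    -- the fiber measures and their covariance `ν_{h[y]}^h = α(h)β(h)ν_y`
    (ν : EuclideanSpace ℝ (Fin n) → Measure (EuclideanSpace ℝ (Fin d)))
    (hcov : ∀ (h : H) (y : EuclideanSpace ℝ (Fin n)),
      Measure.map (σ h⁻¹) (ν (ρ h y)) = ENNReal.ofReal (α h * β h) • ν y)
    -- the operators `T_{y,h}`
    (T : EuclideanSpace ℝ (Fin n) → H → (EuclideanSpace ℝ (Fin d) → ℂ) →
      (EuclideanSpace ℝ (Fin d) → ℂ))
    (hT : ∀ y h f x, T y h f x = (Real.sqrt (α h⁻¹ * β h⁻¹) : ℂ) * f (σ h⁻¹ x)) :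
    -- `T_{y,h}` is isometric from `L²(X,ν_y)` to `L²(X,ν_{h[y]})`
    (∀ (y : EuclideanSpace ℝ (Fin n)) (h : H) (f : EuclideanSpace ℝ (Fin d) → ℂ),
      ∫⁻ x, ‖T y h f x‖₊ ^ 2 ∂(ν (ρ h y)) = ∫⁻ x, ‖f x‖₊ ^ 2 ∂(ν y)) ∧
    -- the cocycle identity `T_{h[y],h'} ∘ T_{y,h} = T_{y,h'h}`
    (∀ (y : EuclideanSpace ℝ (Fin n)) (h h' : H) (f : EuclideanSpace ℝ (Fin d) → ℂ) (x),
      T (ρ h y) h' (T y h f) x = T y (h' * h) f x) ∧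
    -- `T_{y,h}⁻¹ = T_{h[y],h⁻¹}` (two-sided inverse, so `T_{y,h}` is surjective, hence unitary)
    (∀ (y : EuclideanSpace ℝ (Fin n)) (h : H) (f : EuclideanSpace ℝ (Fin d) → ℂ) (x),
      T (ρ h y) h⁻¹ (T y h f) x = f x ∧ T y h (T (ρ h y) h⁻¹ f) x = f x) := by

  -- α and β are characters, hence send `1` to `1`
  have hα1 : α 1 = 1 := by
    have h1 : α 1 * 1 = α 1 * α 1 := by rw [mul_one, ← hα_mul, one_mul]
    exact (mul_left_cancel₀ (hα_pos 1).ne' h1).symm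
  have hβ1 : β 1 = 1 := by
    have h1 : β 1 * 1 = β 1 * β 1 := by rw [mul_one, ← hβ_mul, one_mul]
    exact (mul_left_cancel₀ (hβ_pos 1).ne' h1).symm
  have hαβ_pos : ∀ h : H, 0 < α h * β h := fun h => mul_pos (hα_pos h) (hβ_pos h)
  have hinv : ∀ h : H, α h⁻¹ * β h⁻¹ * (α h * β h) = 1 := by
    intro h
    have e1 : α h⁻¹ * α h = 1 := by rw [← hα_mul, inv_mul_cancel, hα1]
    have e2 : β h⁻¹ * β h = 1 := by rw [← hβ_mul, inv_mul_cancel, hβ1]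
    calc α h⁻¹ * β h⁻¹ * (α h * β h) = (α h⁻¹ * α h) * (β h⁻¹ * β h) := by ring
      _ = 1 := by rw [e1, e2, mul_one]
  have hs1 : ∀ h : H, Real.sqrt (α h⁻¹ * β h⁻¹) * Real.sqrt (α h * β h) = 1 := by
    intro h
    rw [← Real.sqrt_mul (hαβ_pos h⁻¹).le, hinv, Real.sqrt_one]
  refine ⟨?_, ?_, ?_⟩
  · -- isometry
    intro y h f
    -- the action of `σ h⁻¹` as a measurable equivalence
    set e : EuclideanSpace ℝ (Fin d) ≃ᵐ EuclideanSpace ℝ (Fin d) :=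
      Homeomorph.toMeasurableEquiv
        { toFun := σ h⁻¹
          invFun := σ h
          left_inv := fun x => by rw [← hσ_mul, mul_inv_cancel, hσ_one]
          right_inv := fun x => by rw [← hσ_mul, inv_mul_cancel, hσ_one]
          continuous_toFun := hσ_cont h⁻¹
          continuous_invFun := hσ_cont h } with he
    have key : ∀ x, (‖T y h f x‖₊ : ℝ≥0∞) ^ 2
        = ENNReal.ofReal (α h⁻¹ * β h⁻¹) * (‖f (σ h⁻¹ x)‖₊ : ℝ≥0∞) ^ 2 := by
      intro x
      rw [hT, nnnorm_mul, ENNReal.coe_mul, mul_pow]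
      congr 1
      have : (‖(Real.sqrt (α h⁻¹ * β h⁻¹) : ℂ)‖₊ : ℝ≥0∞)
          = ENNReal.ofReal (Real.sqrt (α h⁻¹ * β h⁻¹)) := by
        rw [Complex.nnnorm_real]
        exact Real.enorm_eq_ofReal (Real.sqrt_nonneg _)
      rw [this, ← ENNReal.ofReal_pow (Real.sqrt_nonneg _), Real.sq_sqrt (hαβ_pos h⁻¹).le]
    calc ∫⁻ x, (‖T y h f x‖₊ : ℝ≥0∞) ^ 2 ∂(ν (ρ h y))
        = ∫⁻ x, ENNReal.ofReal (α h⁻¹ * β h⁻¹) * (‖f (σ h⁻¹ x)‖₊ : ℝ≥0∞) ^ 2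
            ∂(ν (ρ h y)) := by simp_rw [key]
      _ = ENNReal.ofReal (α h⁻¹ * β h⁻¹)
            * ∫⁻ x, (‖f (σ h⁻¹ x)‖₊ : ℝ≥0∞) ^ 2 ∂(ν (ρ h y)) :=
          lintegral_const_mul' _ _ ENNReal.ofReal_ne_top
      _ = ENNReal.ofReal (α h⁻¹ * β h⁻¹)
            * ∫⁻ x, (‖f x‖₊ : ℝ≥0∞) ^ 2 ∂(Measure.map (σ h⁻¹) (ν (ρ h y))) := by
          rw [show Measure.map (σ h⁻¹) (ν (ρ h y)) = Measure.map e (ν (ρ h y)) from rfl,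
            lintegral_map_equiv _ e]; rfl
      _ = ENNReal.ofReal (α h⁻¹ * β h⁻¹) * (ENNReal.ofReal (α h * β h)
            * ∫⁻ x, (‖f x‖₊ : ℝ≥0∞) ^ 2 ∂(ν y)) := by
          rw [hcov h y, lintegral_smul_measure, smul_eq_mul]
      _ = ∫⁻ x, (‖f x‖₊ : ℝ≥0∞) ^ 2 ∂(ν y) := by
          rw [← mul_assoc, ← ENNReal.ofReal_mul (hαβ_pos h⁻¹).le, hinv,
            ENNReal.ofReal_one, one_mul]
  · -- cocycle identity
    intro y h h' f x
    have hσeq : σ h⁻¹ (σ h'⁻¹ x) = σ (h' * h)⁻¹ x := by rw [mul_inv_rev, hσ_mul]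
    have hs : Real.sqrt (α h'⁻¹ * β h'⁻¹) * Real.sqrt (α h⁻¹ * β h⁻¹)
        = Real.sqrt (α (h' * h)⁻¹ * β (h' * h)⁻¹) := by
      rw [← Real.sqrt_mul (hαβ_pos h'⁻¹).le]
      congr 1
      rw [mul_inv_rev, hα_mul, hβ_mul]; ring
    rw [hT, hT, hT, hσeq, ← hs]
    push_cast
    ring
  · -- two-sided inverse
    intro y h f x
    have hσ1 : ∀ g : H, σ g⁻¹ (σ g x) = x := fun g => by
      rw [← hσ_mul, inv_mul_cancel, hσ_one]
    constructor
    · rw [hT, hT, inv_inv, hσ1 h]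
      have : ((Real.sqrt (α h * β h) : ℂ)) * ((Real.sqrt (α h⁻¹ * β h⁻¹) : ℂ) * f x)
          = ((Real.sqrt (α h⁻¹ * β h⁻¹) * Real.sqrt (α h * β h) : ℝ) : ℂ) * f x := by
        push_cast; ring
      rw [this, hs1 h]
      simp
    · rw [hT, hT, inv_inv]
      have hx : σ h (σ h⁻¹ x) = x := by rw [← hσ_mul, mul_inv_cancel, hσ_one]
      rw [show σ h⁻¹ x = σ h⁻¹ x from rfl]
      rw [hx]
      have : ((Real.sqrt (α h⁻¹ * β h⁻¹) : ℂ)) * ((Real.sqrt (α h * β h) : ℂ) * f x)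
          = ((Real.sqrt (α h⁻¹ * β h⁻¹) * Real.sqrt (α h * β h) : ℝ) : ℂ) * f x := by
        push_cast; ring
      rw [this, hs1 h]
      simp
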